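/- Define coefficients γ(L) recursively by γ(0)=1 and γ(L) = 1{L even}·(Δ/2)^{L/2}/(L/2)! − Σ_{l=0}^{L−1} γ(l)·x^{L−l}/(L−l)! where x is a real variable. Then for a centered Gaussian random variable Z with variance Δ, and for every polynomial p of degree at most N, E[p(Z)] = Σ_{l=0}^{N} γ(l)(x) · p^{(l)}(x) for all x ∈ ℝ, where γ(l)(x) denotes γ(l) evaluated with x, and p^{(l)} is the l-th derivative of p. -/

import Mathlib

open MeasureTheory ProbabilityTheory
open scoped ENNReal NNReal

-- integrability of x^n * exp(-b x^2)
lemma integrable_pow_mul_exp_neg_mul_sq' {b : ℝ} (hb : 0 < b) (n : ℕ) :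
    Integrable (fun x : ℝ => x ^ n * Real.exp (-b * x ^ 2)) := by
  have hb2 : 0 < b / 2 := by linarith
  refine Integrable.mono' (((integrable_exp_neg_mul_sq hb2).const_mul
      ((Nat.factorial n : ℝ) * Real.exp (1 / (2 * b))))) ?_ ?_
  · exact ((continuous_pow n).mul ((continuous_const.mul (continuous_pow 2)).rexp)).aestronglyMeasurable
  · refine Filter.Eventually.of_forall fun x => ?_
    have h1 : |x| ^ n ≤ (Nat.factorial n : ℝ) * Real.exp |x| := by
      have := Real.sum_le_exp_of_nonneg (abs_nonneg x) (n + 1)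
      have h2 : |x| ^ n / (Nat.factorial n : ℝ) ≤ ∑ i ∈ Finset.range (n + 1), |x| ^ i / (Nat.factorial i : ℝ) := by
        refine Finset.single_le_sum (f := fun i => |x| ^ i / (Nat.factorial i : ℝ)) ?_ (Finset.self_mem_range_succ n)
        intro i _
        positivity
      have h3 := h2.trans this
      have hfac : (0 : ℝ) < (Nat.factorial n : ℝ) := by positivity
      calc |x| ^ n = |x| ^ n / (Nat.factorial n : ℝ) * (Nat.factorial n : ℝ) := by field_simp
        _ ≤ Real.exp |x| * (Nat.factorial n : ℝ) := by
            exact mul_le_mul_of_nonneg_right h3 hfac.le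
        _ = (Nat.factorial n : ℝ) * Real.exp |x| := by ring
    have h5 : 2 * b * |x| ≤ 1 + b ^ 2 * x ^ 2 := by
      nlinarith [sq_nonneg (b * |x| - 1), sq_abs x]
    have h4 : |x| ≤ 1 / (2 * b) + (b / 2) * x ^ 2 := by
      have h2b : (0:ℝ) < 2 * b := by linarith
      calc |x| = (2 * b * |x|) / (2 * b) := by field_simp
        _ ≤ (1 + b ^ 2 * x ^ 2) / (2 * b) := by gcongr
        _ = 1 / (2 * b) + (b / 2) * x ^ 2 := by field_simp
    calc ‖x ^ n * Real.exp (-b * x ^ 2)‖ = |x| ^ n * Real.exp (-b * x ^ 2) := by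
          rw [norm_mul, norm_pow, Real.norm_eq_abs, Real.norm_eq_abs,
            abs_of_pos (Real.exp_pos _)]
      _ ≤ ((Nat.factorial n : ℝ) * Real.exp |x|) * Real.exp (-b * x ^ 2) := by
          exact mul_le_mul_of_nonneg_right h1 (Real.exp_pos _).le
      _ ≤ ((Nat.factorial n : ℝ) * Real.exp (1 / (2 * b) + (b / 2) * x ^ 2)) * Real.exp (-b * x ^ 2) := by
          have := Real.exp_le_exp.mpr h4
          have hf : (0 : ℝ) ≤ (Nat.factorial n : ℝ) := by positivity
          exact mul_le_mul_of_nonneg_right (mul_le_mul_of_nonneg_left this hf) (Real.exp_pos _).le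
      _ = (Nat.factorial n : ℝ) * Real.exp (1 / (2 * b)) * Real.exp (-(b / 2) * x ^ 2) := by
          rw [mul_assoc, mul_assoc, ← Real.exp_add, ← Real.exp_add]
          congr 2
          ring

lemma gauss_rec {b : ℝ} (hb : 0 < b) (n : ℕ) :
    ∫ x : ℝ, x ^ (n + 2) * Real.exp (-b * x ^ 2)
      = ((n : ℝ) + 1) / (2 * b) * ∫ x : ℝ, x ^ n * Real.exp (-b * x ^ 2) := by
  set f' : ℝ → ℝ := fun x => ((n : ℝ) + 1) * (x ^ n * Real.exp (-b * x ^ 2))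
      - (2 * b) * (x ^ (n + 2) * Real.exp (-b * x ^ 2)) with hf'def
  have hderiv : ∀ x : ℝ, HasDerivAt (fun x : ℝ => x ^ (n + 1) * Real.exp (-b * x ^ 2)) (f' x) x := by
    intro x
    have h1 : HasDerivAt (fun x : ℝ => x ^ (n + 1)) (((n : ℝ) + 1) * x ^ n) x := by
      simpa using hasDerivAt_pow (n + 1) x
    have h2 : HasDerivAt (fun x : ℝ => -b * x ^ 2) (-b * (2 * x)) x := by
      simpa using (hasDerivAt_pow 2 x).const_mul (-b)
    have h3 : HasDerivAt (fun x : ℝ => Real.exp (-b * x ^ 2))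
        (Real.exp (-b * x ^ 2) * (-b * (2 * x))) x := (Real.hasDerivAt_exp _).comp x h2
    have h4 := h1.mul h3
    refine h4.congr_deriv ?_
    simp only [hf'def]
    ring
  have hint_n := integrable_pow_mul_exp_neg_mul_sq' hb n
  have hint_n2 := integrable_pow_mul_exp_neg_mul_sq' hb (n + 2)
  have hint_n1 := integrable_pow_mul_exp_neg_mul_sq' hb (n + 1)
  have hf'int : Integrable f' := (hint_n.const_mul _).sub (hint_n2.const_mul _)
  have hzero : ∫ x, f' x = 0 :=
    integral_eq_zero_of_hasDerivAt_of_integrable hderiv hf'int hint_n1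
  rw [hf'def] at hzero
  rw [integral_sub (hint_n.const_mul _) (hint_n2.const_mul _),
    MeasureTheory.integral_const_mul, MeasureTheory.integral_const_mul] at hzero
  have hb' : (2 : ℝ) * b ≠ 0 := by positivity
  rw [div_mul_eq_mul_div, eq_div_iff hb']
  linarith [hzero]

lemma gauss_odd {b : ℝ} (n : ℕ) (hn : ¬ Even n) :
    ∫ x : ℝ, x ^ n * Real.exp (-b * x ^ 2) = 0 := by
  have h := (Measure.measurePreserving_neg (volume : Measure ℝ)).integral_comp
      (Homeomorph.neg ℝ).measurableEmbedding (fun x : ℝ => x ^ n * Real.exp (-b * x ^ 2))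
  have hodd : Odd n := Nat.odd_iff.mpr (Nat.not_even_iff.mp hn)
  have heq : ∀ x : ℝ, ((-x) ^ n * Real.exp (-b * (-x) ^ 2))
      = -(x ^ n * Real.exp (-b * x ^ 2)) := by
    intro x
    rw [hodd.neg_pow, neg_sq]
    ring
  rw [show (fun x : ℝ => (-x) ^ n * Real.exp (-b * (-x) ^ 2))
      = (fun x : ℝ => -(x ^ n * Real.exp (-b * x ^ 2))) from funext heq] at h
  rw [integral_neg] at h
  linarith [h]

lemma gauss_even {b : ℝ} (hb : 0 < b) (k : ℕ) :
    ∫ x : ℝ, x ^ (2 * k) * Real.exp (-b * x ^ 2)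
      = (Nat.factorial (2 * k) : ℝ) / (Nat.factorial k) * (1 / (4 * b)) ^ k
        * ∫ x : ℝ, Real.exp (-b * x ^ 2) := by
  induction k with
  | zero => simp
  | succ k ih =>
    have h1 : 2 * (k + 1) = (2 * k) + 2 := by ring
    rw [h1, gauss_rec hb (2 * k), ih]
    have hk : (Nat.factorial k : ℝ) ≠ 0 := Nat.cast_ne_zero.mpr (Nat.factorial_ne_zero k)
    have hk1 : (Nat.factorial (k + 1) : ℝ) ≠ 0 := Nat.cast_ne_zero.mpr (Nat.factorial_ne_zero _)
    have hfact1 : (Nat.factorial (2 * (k + 1)) : ℝ)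
        = (2 * (k : ℝ) + 2) * (2 * (k : ℝ) + 1) * Nat.factorial (2 * k) := by
      have : 2 * (k + 1) = (2 * k + 1) + 1 := by ring
      rw [this, Nat.factorial_succ, Nat.factorial_succ]
      push_cast
      ring
    have hfact2 : (Nat.factorial (k + 1) : ℝ) = ((k : ℝ) + 1) * Nat.factorial k := by
      rw [Nat.factorial_succ]; push_cast; ring
    rw [h1] at hfact1
    rw [hfact1, hfact2]
    have hbne : b ≠ 0 := ne_of_gt hb
    push_cast
    field_simp
    ring_nf
    simp [hbne]

lemma gaussianPDFReal_eq (Δ : ℝ) (hΔ : 0 < Δ) (x : ℝ) :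
    gaussianPDFReal 0 (Real.toNNReal Δ) x
      = (Real.sqrt (2 * Real.pi * Δ))⁻¹ * Real.exp (-(2 * Δ)⁻¹ * x ^ 2) := by
  have hcoe : ((Real.toNNReal Δ : ℝ≥0) : ℝ) = Δ := Real.coe_toNNReal _ hΔ.le
  rw [gaussianPDFReal, hcoe, sub_zero]
  congr 1
  field_simp

lemma integrable_pow_gaussianReal (Δ : ℝ) (hΔ : 0 ≤ Δ) (n : ℕ) :
    Integrable (fun x : ℝ => x ^ n) (gaussianReal 0 (Real.toNNReal Δ)) := by
  rcases eq_or_lt_of_le hΔ with h | h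
  · rw [← h]
    simp only [Real.toNNReal_zero, gaussianReal_zero_var]
    refine ⟨(measurable_id.pow_const n).aestronglyMeasurable, ?_⟩
    simp only [HasFiniteIntegral, lintegral_dirac]
    exact ENNReal.coe_lt_top
  · have hv : Real.toNNReal Δ ≠ 0 := by
      simp only [ne_eq, Real.toNNReal_eq_zero, not_le]
      exact h
    rw [gaussianReal_of_var_ne_zero 0 hv]
    have hb : 0 < (2 * Δ)⁻¹ := by positivity
    have : gaussianPDF 0 (Real.toNNReal Δ)
        = fun x => ((Real.toNNReal (gaussianPDFReal 0 (Real.toNNReal Δ) x) : ℝ≥0) : ℝ≥0∞) := rfl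
    rw [this, integrable_withDensity_iff_integrable_coe_smul
      ((measurable_gaussianPDFReal 0 (Real.toNNReal Δ)).real_toNNReal)]
    have heq : (fun x : ℝ => ((Real.toNNReal (gaussianPDFReal 0 (Real.toNNReal Δ) x) : ℝ≥0) : ℝ)
        • x ^ n)
        = fun x : ℝ => (Real.sqrt (2 * Real.pi * Δ))⁻¹ * (x ^ n * Real.exp (-(2 * Δ)⁻¹ * x ^ 2)) := by
      funext x
      rw [smul_eq_mul, Real.coe_toNNReal _ (gaussianPDFReal_nonneg _ _ x),
        gaussianPDFReal_eq Δ h x]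
      ring
    rw [heq]
    exact (integrable_pow_mul_exp_neg_mul_sq' hb n).const_mul _

lemma moment_gaussianReal (Δ : ℝ) (hΔ : 0 ≤ Δ) (n : ℕ) :
    ∫ x : ℝ, x ^ n ∂(gaussianReal 0 (Real.toNNReal Δ))
      = (Nat.factorial n : ℝ)
        * (if Even n then (Δ / 2) ^ (n / 2) / (Nat.factorial (n / 2) : ℝ) else 0) := by
  rcases eq_or_lt_of_le hΔ with h | h
  · rw [← h]
    simp only [Real.toNNReal_zero, gaussianReal_zero_var]
    rw [integral_dirac (fun x : ℝ => x ^ n) 0]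
    rcases Nat.eq_zero_or_pos n with hn | hn
    · subst hn; simp
    · rw [zero_pow (Nat.pos_iff_ne_zero.mp hn)]
      by_cases he : Even n
      · obtain ⟨k, hk⟩ := he
        have hk2 : n / 2 = k := by omega
        have hkpos : k ≠ 0 := by omega
        rw [if_pos ⟨k, hk⟩, hk2]
        simp [zero_pow hkpos]
      · simp [he]
  · have hv : Real.toNNReal Δ ≠ 0 := by
      simp only [ne_eq, Real.toNNReal_eq_zero, not_le]; exact h
    have hb : 0 < (2 * Δ)⁻¹ := by positivity
    set C : ℝ := (Real.sqrt (2 * Real.pi * Δ))⁻¹ with hC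
    set b : ℝ := (2 * Δ)⁻¹ with hbdef
    have key : ∀ m : ℕ, ∫ x : ℝ, x ^ m ∂(gaussianReal 0 (Real.toNNReal Δ))
        = C * ∫ x : ℝ, x ^ m * Real.exp (-b * x ^ 2) := by
      intro m
      rw [gaussianReal_of_var_ne_zero 0 hv]
      have hd : gaussianPDF 0 (Real.toNNReal Δ)
          = fun x => ((Real.toNNReal (gaussianPDFReal 0 (Real.toNNReal Δ) x) : ℝ≥0) : ℝ≥0∞) := rfl
      rw [hd, integral_withDensity_eq_integral_smul
        ((measurable_gaussianPDFReal 0 (Real.toNNReal Δ)).real_toNNReal) (fun x => x ^ m)]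
      rw [← MeasureTheory.integral_const_mul]
      congr 1
      funext x
      rw [NNReal.smul_def, smul_eq_mul, Real.coe_toNNReal _ (gaussianPDFReal_nonneg _ _ x),
        gaussianPDFReal_eq Δ h x]
      ring
    have h0 : (1 : ℝ) = C * ∫ x : ℝ, Real.exp (-b * x ^ 2) := by
      have := key 0
      simp only [pow_zero, one_mul] at this
      rw [← this]
      simp
    by_cases he : Even n
    · obtain ⟨k, hk⟩ := he
      have hn2 : n = 2 * k := by omega
      have hk2 : n / 2 = k := by omega
      rw [if_pos ⟨k, hk⟩, hk2, key n, hn2, gauss_even hb k]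
      have h4b : 1 / (4 * b) = Δ / 2 := by
        rw [hbdef]
        field_simp
        ring
      rw [h4b]
      have : C * ((Nat.factorial (2 * k) : ℝ) / (Nat.factorial k) * (Δ / 2) ^ k
          * ∫ x : ℝ, Real.exp (-b * x ^ 2))
          = ((Nat.factorial (2 * k) : ℝ) / (Nat.factorial k) * (Δ / 2) ^ k)
            * (C * ∫ x : ℝ, Real.exp (-b * x ^ 2)) := by ring
      rw [this, ← h0]
      ring
    · rw [if_neg he, key n, gauss_odd n he]
      ring

/-- Let `γ` satisfy the recursion `γ 0 = 1` and
`γ L x = 1{L even}·(Δ/2)^{L/2}/(L/2)! − Σ_{l<L} γ l x · x^{L−l}/(L−l)!`.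
Then for a centered Gaussian `Z` with variance `Δ` and any polynomial `p` of degree at most
`N`, `E[p(Z)] = Σ_{l=0}^{N} γ l x · p^{(l)}(x)` for every `x`. -/
theorem stmt3 {Ω : Type*} {mΩ : MeasurableSpace Ω} (μ : Measure Ω) [IsProbabilityMeasure μ]
    (Δ : ℝ) (hΔ : 0 ≤ Δ) (γ : ℕ → ℝ → ℝ)
    (hγ0 : ∀ x : ℝ, γ 0 x = 1)
    (hγ : ∀ (L : ℕ) (x : ℝ), 0 < L →
      γ L x = (if Even L then (Δ / 2) ^ (L / 2) / (Nat.factorial (L / 2) : ℝ) else 0)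
        - ∑ l ∈ Finset.range L, γ l x * x ^ (L - l) / (Nat.factorial (L - l) : ℝ))
    (Z : Ω → ℝ) (hZ : μ.map Z = gaussianReal 0 (Real.toNNReal Δ))
    (p : Polynomial ℝ) (N : ℕ) (hp : p.natDegree ≤ N) :
    ∀ x : ℝ,
      ∫ ω, p.eval (Z ω) ∂μ
        = ∑ l ∈ Finset.range (N + 1), γ l x * (Polynomial.derivative^[l] p).eval x := by
  intro x
  set ν := gaussianReal 0 (Real.toNNReal Δ) with hν
  set Mf : ℕ → ℝ :=
    fun n => if Even n then (Δ / 2) ^ (n / 2) / (Nat.factorial (n / 2) : ℝ) else 0 with hMf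
  have hZm : AEMeasurable Z μ := aemeasurable_of_map_neZero (by rw [hZ]; infer_instance)
  have hmap : ∫ ω, p.eval (Z ω) ∂μ = ∫ y, p.eval y ∂ν := by
    rw [← hZ]
    exact (integral_map hZm (p.continuous_aeval.aestronglyMeasurable)).symm
  have Skey : ∀ n : ℕ,
      ∑ l ∈ Finset.range (n + 1), γ l x * x ^ (n - l) / (Nat.factorial (n - l) : ℝ) = Mf n := by
    intro n
    rcases Nat.eq_zero_or_pos n with h | h
    · subst h
      simp [hγ0, hMf]
    · rw [Finset.sum_range_succ, Nat.sub_self]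
      simp only [pow_zero, Nat.factorial_zero, Nat.cast_one, mul_one, div_one]
      rw [hγ n x h]
      simp only [hMf]
      ring
  have hmom : ∀ n : ℕ, ∫ y : ℝ, y ^ n ∂ν = (Nat.factorial n : ℝ) * Mf n :=
    fun n => moment_gaussianReal Δ hΔ n
  have hderiv_eval : ∀ l : ℕ, (Polynomial.derivative^[l] p).eval x
      = ∑ n ∈ Finset.range (N + 1),
          p.coeff n * ((n.descFactorial l : ℝ) * x ^ (n - l)) := by
    intro l
    conv_lhs => rw [Polynomial.as_sum_range' p (N + 1) (Nat.lt_succ_of_le hp)]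
    rw [Polynomial.iterate_derivative_sum, Polynomial.eval_finset_sum]
    refine Finset.sum_congr rfl fun n _ => ?_
    rw [← Polynomial.C_mul_X_pow_eq_monomial, Polynomial.iterate_derivative_C_mul,
      Polynomial.iterate_derivative_X_pow_eq_natCast_mul]
    simp [mul_assoc]
  have hLHS : ∫ y, p.eval y ∂ν
      = ∑ n ∈ Finset.range (N + 1), p.coeff n * ((Nat.factorial n : ℝ) * Mf n) := by
    have : ∀ y : ℝ, p.eval y = ∑ n ∈ Finset.range (N + 1), p.coeff n * y ^ n :=
      fun y => Polynomial.eval_eq_sum_range' (Nat.lt_succ_of_le hp) y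
    simp only [this]
    rw [integral_finset_sum _ (fun n _ => (integrable_pow_gaussianReal Δ hΔ n).const_mul _)]
    refine Finset.sum_congr rfl fun n _ => ?_
    rw [MeasureTheory.integral_const_mul, hmom n]
  rw [hmap, hLHS]
  simp only [hderiv_eval, Finset.mul_sum]
  rw [Finset.sum_comm]
  refine Finset.sum_congr rfl fun n hn => ?_
  have hnN : n ≤ N := Nat.lt_succ_iff.mp (Finset.mem_range.mp hn)
  have hsub : Finset.range (n + 1) ⊆ Finset.range (N + 1) :=
    Finset.range_subset_range.mpr (by omega)
  rw [← Finset.sum_subset hsub (fun l _ hl => by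
    have hnl : n < l := by
      simp only [Finset.mem_range] at hl
      omega
    rw [Nat.descFactorial_eq_zero_iff_lt.mpr hnl]
    simp)]
  have : ∑ l ∈ Finset.range (n + 1), γ l x * (p.coeff n * ((n.descFactorial l : ℝ) * x ^ (n - l)))
      = p.coeff n * ((Nat.factorial n : ℝ)
        * ∑ l ∈ Finset.range (n + 1), γ l x * x ^ (n - l) / (Nat.factorial (n - l) : ℝ)) := by
    rw [Finset.mul_sum, Finset.mul_sum]
    refine Finset.sum_congr rfl fun l hl => ?_
    have hln : l ≤ n := Nat.lt_succ_iff.mp (Finset.mem_range.mp hl)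
    have hne : ((Nat.factorial (n - l) : ℝ)) ≠ 0 :=
      Nat.cast_ne_zero.mpr (Nat.factorial_ne_zero _)
    have hd : (n.descFactorial l : ℝ) = (Nat.factorial n : ℝ) / (Nat.factorial (n - l) : ℝ) := by
      rw [eq_div_iff hne, mul_comm]
      exact_mod_cast Nat.factorial_mul_descFactorial hln
    rw [hd]
    field_simp
  rw [this, Skey n]
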